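/- arXiv:2004.09875 — 5 statements merged into one kernel-verified Lean document; each statement's English description precedes it below -/
import Mathlib

section
/- Let A be an n×n real Hurwitz matrix, Q symmetric positive definite, and X ≻ 0 the solution of the Lyapunov equation Aᵀ X + X A + Q = 0. Then the smallest eigenvalue of X satisfies λ₁(X) ≥ λ₁(Q) / (2‖A‖), where ‖A‖ is the spectral norm. -/
open Matrix

def IsHurwitz {n : ℕ} (A : Matrix (Fin n) (Fin n) ℝ) : Prop :=
  ∀ μ ∈ spectrum ℂ (A.map (Complex.ofReal : ℝ → ℂ)), μ.re < 0

/-- Spectral (ℓ²-operator) norm of a real matrix. -/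
noncomputable def specNorm {m n : ℕ} (A : Matrix (Fin m) (Fin n) ℝ) : ℝ :=
  ‖LinearMap.toContinuousLinearMap (Matrix.toEuclideanLin A)‖

lemma rayleigh_lower {n : ℕ} [Nonempty (Fin n)] (Q : Matrix (Fin n) (Fin n) ℝ)
    (hQ : Q.IsHermitian) (v : Fin n → ℝ) :
    (⨅ i, hQ.eigenvalues i) * (v ⬝ᵥ v) ≤ v ⬝ᵥ (Q *ᵥ v) := by
  set c := ⨅ i, hQ.eigenvalues i with hc
  have hcle : ∀ i, c ≤ hQ.eigenvalues i := fun i => ciInf_le (Finite.bddBelow_range _) i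
  set U : Matrix (Fin n) (Fin n) ℝ := (hQ.eigenvectorUnitary : Matrix (Fin n) (Fin n) ℝ) with hU
  have hUU : U * star U = 1 := (Matrix.mem_unitaryGroup_iff).mp hQ.eigenvectorUnitary.2
  have h1 : Q - c • 1 = U * (Matrix.diagonal (fun i => hQ.eigenvalues i - c)) * star U := by
    have hs : Q = U * Matrix.diagonal (RCLike.ofReal ∘ hQ.eigenvalues) * star U :=
      hQ.spectral_theorem
    have hcU : c • (1 : Matrix (Fin n) (Fin n) ℝ) = U * (c • 1) * star U := by
      rw [Matrix.mul_smul, Matrix.smul_mul, mul_one, hUU]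
    have hd : Matrix.diagonal (fun i => hQ.eigenvalues i - c) =
        Matrix.diagonal (RCLike.ofReal ∘ hQ.eigenvalues) - c • 1 := by
      rw [Matrix.smul_one_eq_diagonal, Matrix.diagonal_sub]
      congr 1
    rw [hd, Matrix.mul_sub, Matrix.sub_mul, ← hcU, ← hs]
  have hPSD : (Q - c • 1).PosSemidef := by
    rw [h1]
    exact (Matrix.posSemidef_diagonal_iff.mpr fun i =>
      sub_nonneg.mpr (hcle i)).mul_mul_conjTranspose_same U
  have h2 := hPSD.dotProduct_mulVec_nonneg v
  simp only [Matrix.sub_mulVec, Matrix.smul_mulVec, Matrix.one_mulVec, star_trivial,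
    dotProduct_sub, dotProduct_smul, RCLike.re_to_real, smul_eq_mul] at h2
  linarith

theorem stmt_5 {n : ℕ} (A Q X : Matrix (Fin n) (Fin n) ℝ)
    (hA : IsHurwitz A) (hQ : Q.PosDef) (hX : X.PosDef)
    (hLyap : Aᵀ * X + X * A + Q = 0) :
    (⨅ i, hQ.1.eigenvalues i) / (2 * specNorm A) ≤ ⨅ i, hX.1.eigenvalues i := by
  rcases isEmpty_or_nonempty (Fin n) with hn | hn
  · simp [Real.iInf_of_isEmpty]
  · set lam := ⨅ i, hX.1.eigenvalues i with hlam
    obtain ⟨i₀, hi₀⟩ := Finite.exists_min hX.1.eigenvalues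
    have hlami : lam = hX.1.eigenvalues i₀ :=
      le_antisymm (ciInf_le (Finite.bddBelow_range _) i₀) (le_ciInf hi₀)
    have hlampos : 0 < lam := hlami ▸ hX.eigenvalues_pos i₀
    set cQ := ⨅ i, hQ.1.eigenvalues i with hcQ
    obtain ⟨j₀, hj₀⟩ := Finite.exists_min hQ.1.eigenvalues
    have hcQpos : 0 < cQ := lt_of_lt_of_le (hQ.eigenvalues_pos j₀) (le_ciInf hj₀)
    set b : EuclideanSpace ℝ (Fin n) := hX.1.eigenvectorBasis i₀ with hb
    set v : Fin n → ℝ := ⇑b with hv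
    have hXv : X *ᵥ v = lam • v := by
      rw [hlami]; exact hX.1.mulVec_eigenvectorBasis i₀
    have hnb : ‖b‖ = 1 := hX.1.eigenvectorBasis.orthonormal.1 i₀
    have hvv : v ⬝ᵥ v = 1 := by
      have h : (inner ℝ b b : ℝ) = v ⬝ᵥ v := by
        rw [EuclideanSpace.inner_eq_star_dotProduct]; rfl
      rw [← h, real_inner_self_eq_norm_sq, hnb]; norm_num
    have hAv : |v ⬝ᵥ (A *ᵥ v)| ≤ specNorm A := by
      set w : EuclideanSpace ℝ (Fin n) := Matrix.toEuclideanLin A b with hw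
      have h1 : (inner ℝ b w : ℝ) = v ⬝ᵥ (A *ᵥ v) := by
        rw [EuclideanSpace.inner_eq_star_dotProduct, dotProduct_comm]; rfl
      have h2 : ‖w‖ ≤ specNorm A := by
        have := (LinearMap.toContinuousLinearMap (Matrix.toEuclideanLin A)).le_opNorm b
        simpa [hnb, specNorm, hw] using this
      calc |v ⬝ᵥ (A *ᵥ v)| = |(inner ℝ b w : ℝ)| := by rw [h1]
        _ ≤ ‖b‖ * ‖w‖ := abs_real_inner_le_norm b w
        _ ≤ specNorm A := by rw [hnb, one_mul]; exact h2
    have hXt : Xᵀ = X := hX.1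
    have hQeq : Q = -(Aᵀ * X + X * A) := eq_neg_of_add_eq_zero_right hLyap
    have hQv : v ⬝ᵥ (Q *ᵥ v) = -(2 * (lam * (v ⬝ᵥ (A *ᵥ v)))) := by
      have t1 : v ⬝ᵥ ((Aᵀ * X) *ᵥ v) = lam * (v ⬝ᵥ (A *ᵥ v)) := by
        rw [← Matrix.mulVec_mulVec, hXv, Matrix.mulVec_smul, dotProduct_smul,
          smul_eq_mul, Matrix.dotProduct_mulVec, Matrix.vecMul_transpose,
          dotProduct_comm]
      have t2 : v ⬝ᵥ ((X * A) *ᵥ v) = lam * (v ⬝ᵥ (A *ᵥ v)) := by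
        rw [← Matrix.mulVec_mulVec, Matrix.dotProduct_mulVec, ← Matrix.mulVec_transpose,
          hXt, hXv, smul_dotProduct, smul_eq_mul]
      rw [hQeq, Matrix.neg_mulVec, dotProduct_neg, Matrix.add_mulVec,
        dotProduct_add, t1, t2]
      ring
    have key : cQ ≤ 2 * lam * specNorm A := by
      have h0 := rayleigh_lower Q hQ.1 v
      rw [hvv, mul_one, hQv] at h0
      nlinarith [neg_abs_le (v ⬝ᵥ (A *ᵥ v)), abs_nonneg (v ⬝ᵥ (A *ᵥ v))]
    have hS : 0 < specNorm A := by nlinarith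
    rw [div_le_iff₀ (by positivity)]
    nlinarith
end

section
/- Let A be an n×n real Hurwitz matrix with stability degree σ(A) = −maxᵢ Re λᵢ(A) > 0, Q symmetric positive definite, and X the positive definite solution of Aᵀ X + X A + Q = 0. Then the largest eigenvalue of X satisfies λₙ(X) ≥ λ₁(Q)/(2σ(A)). -/
open Matrix

/-- Stability degree: minus the largest real part of the (complex) spectrum. -/
noncomputable def stabDegree {n : ℕ} (A : Matrix (Fin n) (Fin n) ℝ) : ℝ :=
  -sSup (Complex.re '' spectrum ℂ (A.map (Complex.ofReal : ℝ → ℂ)))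

lemma aux_sub_smul_posSemidef {n : ℕ} {M : Matrix (Fin n) (Fin n) ℝ} (hM : M.IsHermitian)
    {c : ℝ} (hc : ∀ i, c ≤ hM.eigenvalues i) : (M - c • 1).PosSemidef := by
  have hU : (hM.eigenvectorUnitary : Matrix (Fin n) (Fin n) ℝ) *
      star (hM.eigenvectorUnitary : Matrix (Fin n) (Fin n) ℝ) = 1 :=
    (Matrix.mem_unitaryGroup_iff).mp hM.eigenvectorUnitary.2
  have key : M - c • 1 = (hM.eigenvectorUnitary : Matrix (Fin n) (Fin n) ℝ) *
      (diagonal (fun i => hM.eigenvalues i - c)) *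
      star (hM.eigenvectorUnitary : Matrix (Fin n) (Fin n) ℝ) := by
    have h1 : (c • 1 : Matrix (Fin n) (Fin n) ℝ) =
        (hM.eigenvectorUnitary : Matrix (Fin n) (Fin n) ℝ) * (c • 1) *
        star (hM.eigenvectorUnitary : Matrix (Fin n) (Fin n) ℝ) := by
      rw [Matrix.mul_smul, Matrix.smul_mul, mul_one, hU]
    nth_rewrite 1 [hM.spectral_theorem]
    rw [Unitary.conjStarAlgAut_apply]
    nth_rewrite 1 [h1]
    rw [← Matrix.sub_mul, ← Matrix.mul_sub]
    congr 2
    rw [Matrix.smul_one_eq_diagonal, Matrix.diagonal_sub]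
    congr 1
  rw [key]
  have hd : PosSemidef (diagonal (fun i => hM.eigenvalues i - c)) :=
    Matrix.posSemidef_diagonal_iff.mpr (fun i => by linarith [hc i])
  have h5 := hd.mul_mul_conjTranspose_same (hM.eigenvectorUnitary : Matrix (Fin n) (Fin n) ℝ)
  rwa [← Matrix.star_eq_conjTranspose] at h5

lemma aux_smul_sub_posSemidef {n : ℕ} {M : Matrix (Fin n) (Fin n) ℝ} (hM : M.IsHermitian)
    {c : ℝ} (hc : ∀ i, hM.eigenvalues i ≤ c) : (c • 1 - M).PosSemidef := by
  have hU : (hM.eigenvectorUnitary : Matrix (Fin n) (Fin n) ℝ) *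
      star (hM.eigenvectorUnitary : Matrix (Fin n) (Fin n) ℝ) = 1 :=
    (Matrix.mem_unitaryGroup_iff).mp hM.eigenvectorUnitary.2
  have key : c • 1 - M = (hM.eigenvectorUnitary : Matrix (Fin n) (Fin n) ℝ) *
      (diagonal (fun i => c - hM.eigenvalues i)) *
      star (hM.eigenvectorUnitary : Matrix (Fin n) (Fin n) ℝ) := by
    have h1 : (c • 1 : Matrix (Fin n) (Fin n) ℝ) =
        (hM.eigenvectorUnitary : Matrix (Fin n) (Fin n) ℝ) * (c • 1) *
        star (hM.eigenvectorUnitary : Matrix (Fin n) (Fin n) ℝ) := by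
      rw [Matrix.mul_smul, Matrix.smul_mul, mul_one, hU]
    nth_rewrite 1 [hM.spectral_theorem]
    rw [Unitary.conjStarAlgAut_apply]
    nth_rewrite 1 [h1]
    rw [← Matrix.sub_mul, ← Matrix.mul_sub]
    congr 2
    rw [Matrix.smul_one_eq_diagonal, Matrix.diagonal_sub]
    congr 1
  rw [key]
  have hd : PosSemidef (diagonal (fun i => c - hM.eigenvalues i)) :=
    Matrix.posSemidef_diagonal_iff.mpr (fun i => by linarith [hc i])
  have h5 := hd.mul_mul_conjTranspose_same (hM.eigenvectorUnitary : Matrix (Fin n) (Fin n) ℝ)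
  rwa [← Matrix.star_eq_conjTranspose] at h5

lemma aux_quad_lower {n : ℕ} {M : Matrix (Fin n) (Fin n) ℝ} {c : ℝ}
    (h : (M - c • 1).PosSemidef) (y : Fin n → ℝ) :
    c * (y ⬝ᵥ y) ≤ y ⬝ᵥ M *ᵥ y := by
  have := h.dotProduct_mulVec_nonneg y
  simp only [star_trivial, Matrix.sub_mulVec, Matrix.smul_mulVec, Matrix.one_mulVec,
    dotProduct_sub, dotProduct_smul, smul_eq_mul] at this
  linarith

lemma aux_quad_upper {n : ℕ} {M : Matrix (Fin n) (Fin n) ℝ} {c : ℝ}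
    (h : (c • 1 - M).PosSemidef) (y : Fin n → ℝ) :
    y ⬝ᵥ M *ᵥ y ≤ c * (y ⬝ᵥ y) := by
  have := h.dotProduct_mulVec_nonneg y
  simp only [star_trivial, Matrix.sub_mulVec, Matrix.smul_mulVec, Matrix.one_mulVec,
    dotProduct_sub, dotProduct_smul, smul_eq_mul] at this
  linarith

lemma aux_re_quad {n : ℕ} (M : Matrix (Fin n) (Fin n) ℝ) (v : Fin n → ℂ) :
    (star v ⬝ᵥ (M.map (Complex.ofReal : ℝ → ℂ)) *ᵥ v).re =
      (fun i => (v i).re) ⬝ᵥ M *ᵥ (fun i => (v i).re) +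
      (fun i => (v i).im) ⬝ᵥ M *ᵥ (fun i => (v i).im) := by
  simp only [dotProduct, mulVec, Matrix.map_apply, Pi.star_apply]
  rw [Complex.re_sum, ← Finset.sum_add_distrib]
  refine Finset.sum_congr rfl fun i _ => ?_
  rw [Finset.mul_sum, Complex.re_sum, Finset.mul_sum, Finset.mul_sum, ← Finset.sum_add_distrib]
  refine Finset.sum_congr rfl fun j _ => ?_
  simp [Complex.mul_re, Complex.mul_im]
  try ring

theorem stmt_6 {n : ℕ} (A Q X : Matrix (Fin n) (Fin n) ℝ)
    (hA : IsHurwitz A) (hσ : 0 < stabDegree A) (hQ : Q.PosDef) (hX : X.PosDef)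
    (hLyap : Aᵀ * X + X * A + Q = 0) :
    (⨅ i, hQ.1.eigenvalues i) / (2 * stabDegree A) ≤ ⨆ i, hX.1.eigenvalues i := by
  rcases Nat.eq_zero_or_pos n with hn | hn
  · subst hn
    simp [Real.iInf_of_isEmpty, Real.iSup_of_isEmpty]
  have : NeZero n := ⟨hn.ne'⟩
  set B := A.map (Complex.ofReal : ℝ → ℂ) with hBdef
  -- spectrum nonempty and finite; pick eigenvalue with maximal real part
  have hne : (spectrum ℂ B).Nonempty :=
    spectrum.nonempty_of_isAlgClosed_of_finiteDimensional ℂ B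
  have hfin : (Complex.re '' spectrum ℂ B).Finite := (B.finite_spectrum).image _
  have hSne : (Complex.re '' spectrum ℂ B).Nonempty := hne.image _
  obtain ⟨μ, hμ, hμre⟩ := hSne.csSup_mem hfin
  have hμre' : μ.re = -stabDegree A := by
    rw [hμre, stabDegree, neg_neg]
  -- eigenvector
  have hev : Module.End.HasEigenvalue (Matrix.toLin' B) μ := by
    rw [Module.End.hasEigenvalue_iff_mem_spectrum]
    have := AlgEquiv.spectrum_eq
      (Matrix.toLinAlgEquiv' : Matrix (Fin n) (Fin n) ℂ ≃ₐ[ℂ] _) B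
    rw [show (Matrix.toLinAlgEquiv' B : (Fin n → ℂ) →ₗ[ℂ] (Fin n → ℂ)) = Matrix.toLin' B from rfl]
      at this
    rw [this]
    exact hμ
  obtain ⟨v, hv⟩ := hev.exists_hasEigenvector
  have hv0 : v ≠ 0 := hv.2
  have hBv : B *ᵥ v = μ • v := by
    have := hv.apply_eq_smul
    rwa [Matrix.toLin'_apply] at this
  -- complexified Lyapunov equation
  have hL : (Aᵀ.map (Complex.ofReal : ℝ → ℂ)) * (X.map Complex.ofReal)
      + (X.map Complex.ofReal) * B + Q.map Complex.ofReal = 0 := by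
    ext i j
    have h0 : (Aᵀ * X + X * A + Q) i j = 0 := by rw [hLyap]; rfl
    simp only [Matrix.add_apply, Matrix.mul_apply] at h0
    simp only [hBdef, Matrix.add_apply, Matrix.mul_apply, Matrix.map_apply, Matrix.zero_apply]
    exact_mod_cast congrArg (Complex.ofReal : ℝ → ℂ) h0
  set xC := star v ⬝ᵥ (X.map (Complex.ofReal : ℝ → ℂ)) *ᵥ v with hxC
  set qC := star v ⬝ᵥ (Q.map (Complex.ofReal : ℝ → ℂ)) *ᵥ v with hqC
  have h1 : star v ⬝ᵥ ((X.map (Complex.ofReal : ℝ → ℂ)) * B) *ᵥ v = μ * xC := by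
    rw [← Matrix.mulVec_mulVec, hBv, Matrix.mulVec_smul, dotProduct_smul, smul_eq_mul]
  have hBstar : B *ᵥ star v = star (B *ᵥ v) := by
    funext i
    simp only [mulVec, dotProduct, Pi.star_apply, star_sum, star_mul']
    refine Finset.sum_congr rfl fun j _ => ?_
    simp [hBdef, Complex.conj_ofReal, mul_comm]
  have h2 : star v ⬝ᵥ ((Aᵀ.map (Complex.ofReal : ℝ → ℂ)) * (X.map Complex.ofReal)) *ᵥ v
      = (starRingEnd ℂ) μ * xC := by
    rw [← Matrix.mulVec_mulVec, Matrix.dotProduct_mulVec, Matrix.transpose_map,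
      Matrix.vecMul_transpose, hBstar, hBv, star_smul, smul_dotProduct]
    simp [smul_eq_mul]
    exact Or.inl rfl
  have hsum : (starRingEnd ℂ) μ * xC + μ * xC + qC = 0 := by
    have := congrArg (fun M : Matrix (Fin n) (Fin n) ℂ => star v ⬝ᵥ M *ᵥ v) hL
    simpa [Matrix.add_mulVec, dotProduct_add, h1, h2] using this
  -- take real parts
  have hre : 2 * μ.re * xC.re + qC.re = 0 := by
    have h3 : (starRingEnd ℂ) μ * xC + μ * xC = ((2 * μ.re : ℝ) : ℂ) * xC := by
      rw [← add_mul, add_comm ((starRingEnd ℂ) μ) μ, Complex.add_conj]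
    have := congrArg Complex.re hsum
    rw [show (starRingEnd ℂ) μ * xC + μ * xC + qC = ((starRingEnd ℂ) μ * xC + μ * xC) + qC
      from rfl, h3] at this
    simpa [Complex.add_re, Complex.mul_re] using this
  set a : Fin n → ℝ := fun i => (v i).re with ha
  set b : Fin n → ℝ := fun i => (v i).im with hb
  have hxR : xC.re = a ⬝ᵥ X *ᵥ a + b ⬝ᵥ X *ᵥ b := aux_re_quad X v
  have hqR : qC.re = a ⬝ᵥ Q *ᵥ a + b ⬝ᵥ Q *ᵥ b := aux_re_quad Q v
  set t := a ⬝ᵥ a + b ⬝ᵥ b with ht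
  have htpos : 0 < t := by
    obtain ⟨i, hi⟩ := Function.ne_iff.mp hv0
    have h4 : t = ∑ j, ((v j).re ^ 2 + (v j).im ^ 2) := by
      rw [ht, dotProduct, dotProduct, ← Finset.sum_add_distrib]
      exact Finset.sum_congr rfl fun j _ => by ring
    rw [h4]
    refine Finset.sum_pos' (fun j _ => by positivity) ⟨i, Finset.mem_univ i, ?_⟩
    have : Complex.normSq (v i) > 0 := Complex.normSq_pos.mpr hi
    rw [Complex.normSq_apply] at this
    nlinarith
  set q0 := ⨅ i, hQ.1.eigenvalues i with hq0
  set x0 := ⨆ i, hX.1.eigenvalues i with hx0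
  have hq0le : ∀ i, q0 ≤ hQ.1.eigenvalues i := fun i =>
    ciInf_le (Set.Finite.bddBelow (Set.finite_range _)) i
  have hx0ge : ∀ i, hX.1.eigenvalues i ≤ x0 := fun i =>
    le_ciSup (Set.Finite.bddAbove (Set.finite_range _)) i
  have hQps := aux_sub_smul_posSemidef hQ.1 hq0le
  have hXps := aux_smul_sub_posSemidef hX.1 hx0ge
  have hqlb : q0 * t ≤ qC.re := by
    rw [hqR, ht, mul_add]
    exact add_le_add (aux_quad_lower hQps a) (aux_quad_lower hQps b)
  have hxub : xC.re ≤ x0 * t := by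
    rw [hxR, ht, mul_add]
    exact add_le_add (aux_quad_upper hXps a) (aux_quad_upper hXps b)
  -- combine
  have hσ2 : (0:ℝ) < 2 * stabDegree A := by linarith
  have hkey : qC.re = 2 * stabDegree A * xC.re := by
    rw [hμre'] at hre; linarith
  have hchain : q0 * t ≤ 2 * stabDegree A * (x0 * t) := by
    calc q0 * t ≤ qC.re := hqlb
    _ = 2 * stabDegree A * xC.re := hkey
    _ ≤ 2 * stabDegree A * (x0 * t) := mul_le_mul_of_nonneg_left hxub (le_of_lt hσ2)
  have hq0x0 : q0 ≤ 2 * stabDegree A * x0 :=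
    le_of_mul_le_mul_right (by nlinarith [hchain]) htpos
  rw [div_le_iff₀ hσ2]
  linarith [hq0x0]
end

section
/- Let K ∈ S be a stabilizing gain for the system (A, B, C), with Σ ≻ 0, Q ≻ 0, R ≻ 0, and let X ≻ 0 solve the closed-loop Lyapunov equation (A−BKC)ᵀX + X(A−BKC) + CᵀKᵀRKC + Q = 0. Then the LQR cost f(K) = Tr(XΣ) satisfies f(K) ≥ λ₁(Σ)λ₁(Q)/(−2 Re λₙ(A−BKC)), where λₙ(A−BKC) is the eigenvalue of largest real part. -/
open Matrix

section Aux

variable {n : ℕ}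

private lemma psd_dot {P : Matrix (Fin n) (Fin n) ℝ} (hP : P.PosSemidef) (x : Fin n → ℝ) :
    0 ≤ x ⬝ᵥ (P *ᵥ x) := by simpa using hP.dotProduct_mulVec_nonneg x

private lemma herm_conj_diag {M : Matrix (Fin n) (Fin n) ℝ} (hM : M.IsHermitian) (c : ℝ) :
    M - c • 1 = (hM.eigenvectorUnitary : Matrix (Fin n) (Fin n) ℝ) *
      diagonal (fun i => hM.eigenvalues i - c) *
      star (hM.eigenvectorUnitary : Matrix (Fin n) (Fin n) ℝ) := by
  set U := (hM.eigenvectorUnitary : Matrix (Fin n) (Fin n) ℝ) with hU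
  have hUU : U * star U = 1 := Matrix.mem_unitaryGroup_iff.mp hM.eigenvectorUnitary.2
  nth_rewrite 1 [hM.spectral_theorem, Unitary.conjStarAlgAut_apply]
  have h1 : (c : ℝ) • (1 : Matrix (Fin n) (Fin n) ℝ) = U * (c • 1) * star U := by
    rw [Matrix.mul_smul, Matrix.mul_one, Matrix.smul_mul, hUU]
  rw [h1, ← Matrix.sub_mul, ← Matrix.mul_sub]
  have h2 : diagonal (RCLike.ofReal ∘ hM.eigenvalues) - c • (1 : Matrix (Fin n) (Fin n) ℝ)
      = diagonal (fun i => hM.eigenvalues i - c) := by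
    rw [smul_one_eq_diagonal, ← diagonal_sub]
    congr 1
  rw [h2]

private lemma herm_sub_smul_one {M : Matrix (Fin n) (Fin n) ℝ} (hM : M.IsHermitian) {c : ℝ}
    (h : ∀ i, c ≤ hM.eigenvalues i) : (M - c • 1).PosSemidef := by
  rw [herm_conj_diag hM c]
  exact (Matrix.PosSemidef.diagonal (fun i => sub_nonneg.2 (h i))).mul_mul_conjTranspose_same _

private lemma herm_smul_one_sub {M : Matrix (Fin n) (Fin n) ℝ} (hM : M.IsHermitian) {c : ℝ}
    (h : ∀ i, hM.eigenvalues i ≤ c) : (c • 1 - M).PosSemidef := by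
  have hneg : -(diagonal (fun i => hM.eigenvalues i - c))
      = diagonal (fun i : Fin n => c - hM.eigenvalues i) := by
    ext i j
    by_cases hij : i = j
    · subst hij; simp [Matrix.diagonal_apply_eq]
    · simp [Matrix.diagonal_apply_ne _ hij]
  have : c • (1 : Matrix (Fin n) (Fin n) ℝ) - M = -(M - c • 1) := (neg_sub _ _).symm
  rw [this, herm_conj_diag hM c, ← Matrix.neg_mul, ← Matrix.mul_neg, hneg]
  exact (Matrix.PosSemidef.diagonal (fun i => sub_nonneg.2 (h i))).mul_mul_conjTranspose_same _

private lemma trace_eq_sum_eig {M : Matrix (Fin n) (Fin n) ℝ} (hM : M.IsHermitian) :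
    M.trace = ∑ i, hM.eigenvalues i := by
  nth_rewrite 1 [hM.spectral_theorem, Unitary.conjStarAlgAut_apply]
  rw [Matrix.trace_mul_cycle]
  have hUU : star (hM.eigenvectorUnitary : Matrix (Fin n) (Fin n) ℝ) *
      (hM.eigenvectorUnitary : Matrix (Fin n) (Fin n) ℝ) = 1 :=
    Matrix.mem_unitaryGroup_iff'.mp hM.eigenvectorUnitary.2
  rw [hUU, Matrix.one_mul, Matrix.trace_diagonal]
  simp [RCLike.ofReal_real_eq_id]

private lemma trace_mul_psd_nonneg {P S : Matrix (Fin n) (Fin n) ℝ} (hP : P.PosSemidef)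
    (hS : S.PosSemidef) : 0 ≤ (P * S).trace := by
  obtain ⟨B, rfl⟩ : ∃ B : Matrix (Fin n) (Fin n) ℝ, P = Bᵀ * B := by
    open scoped MatrixOrder in
    obtain ⟨B, hB⟩ := CStarAlgebra.nonneg_iff_eq_star_mul_self.mp hP.nonneg
    exact ⟨B, by rw [hB, star_eq_conjTranspose, conjTranspose_eq_transpose_of_trivial]⟩
  rw [Matrix.mul_assoc, Matrix.trace_mul_comm]
  have hpsd := hS.mul_mul_conjTranspose_same B
  rw [Matrix.trace]
  refine Finset.sum_nonneg fun i _ => ?_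
  have h0 := hpsd.dotProduct_mulVec_nonneg (Pi.single i 1)
  simpa [Matrix.diag_apply, mulVec_single, single_dotProduct] using h0

end Aux

theorem stmt_11 {n m r : ℕ}
    (A : Matrix (Fin n) (Fin n) ℝ) (B : Matrix (Fin n) (Fin m) ℝ)
    (C : Matrix (Fin r) (Fin n) ℝ) (K : Matrix (Fin m) (Fin r) ℝ)
    (Sig Q X : Matrix (Fin n) (Fin n) ℝ) (R : Matrix (Fin m) (Fin m) ℝ)
    (hHur : IsHurwitz (A - B * K * C))
    (hSig : Sig.PosDef) (hQ : Q.PosDef) (hR : R.PosDef) (hX : X.PosDef)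
    (hLyap : (A - B * K * C)ᵀ * X + X * (A - B * K * C) + Cᵀ * Kᵀ * R * K * C + Q = 0) :
    (⨅ i, hSig.1.eigenvalues i) * (⨅ i, hQ.1.eigenvalues i) /
      (-2 * sSup (Complex.re '' spectrum ℂ ((A - B * K * C).map (Complex.ofReal : ℝ → ℂ))))
      ≤ (X * Sig).trace := by
  rcases Nat.eq_zero_or_pos n with hn | hn
  · subst hn
    have hsp : spectrum ℂ ((A - B * K * C).map (Complex.ofReal : ℝ → ℂ)) = ∅ := by
      ext μ
      simp [spectrum.mem_iff, isUnit_of_subsingleton]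
    rw [hsp]
    simp [Real.sSup_empty, Matrix.trace]
  haveI hne : Nonempty (Fin n) := ⟨⟨0, hn⟩⟩
  set Ak := A - B * K * C with hAkdef
  set Akc := Ak.map (Complex.ofReal : ℝ → ℂ) with hAkcdef
  set s := sSup (Complex.re '' spectrum ℂ Akc) with hsdef
  have hnonempty : (spectrum ℂ Akc).Nonempty :=
    spectrum.nonempty_of_isAlgClosed_of_finiteDimensional ℂ Akc
  have hfin : (Complex.re '' spectrum ℂ Akc).Finite := (Akc.finite_spectrum).image _
  have hsmem : s ∈ Complex.re '' spectrum ℂ Akc := (hnonempty.image _).csSup_mem hfin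
  obtain ⟨μ, hμmem, hμre⟩ := hsmem
  have ha : μ.re < 0 := hHur μ hμmem
  have hslt : s < 0 := hμre ▸ ha
  -- eigenvector
  have hdet : (μ • 1 - Akc).det = 0 := by
    have hnu : ¬ IsUnit (algebraMap ℂ (Matrix (Fin n) (Fin n) ℂ) μ - Akc) :=
      spectrum.mem_iff.mp hμmem
    by_contra hd
    refine hnu ?_
    rw [Algebra.algebraMap_eq_smul_one]
    exact (Matrix.isUnit_iff_isUnit_det _).mpr (isUnit_iff_ne_zero.mpr hd)
  obtain ⟨v, hv0, hveq⟩ := (Matrix.exists_mulVec_eq_zero_iff).mpr hdet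
  have hv : Akc *ᵥ v = μ • v := by
    rw [sub_mulVec, sub_eq_zero] at hveq
    rw [← hveq, smul_mulVec, one_mulVec]
  set x : Fin n → ℝ := fun i => (v i).re with hxdef
  set y : Fin n → ℝ := fun i => (v i).im with hydef
  have hAx : Ak *ᵥ x = μ.re • x - μ.im • y := by
    funext i
    have h1 := congrFun hv i
    simp only [hAkcdef, mulVec, dotProduct, Matrix.map_apply, Pi.smul_apply, smul_eq_mul] at h1
    have h2 := congrArg Complex.re h1
    simp only [Complex.re_sum, Complex.mul_re, Complex.ofReal_re, Complex.ofReal_im,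
      zero_mul, mul_zero, sub_zero] at h2
    simpa [mulVec, dotProduct, hxdef, hydef, mul_comm] using h2
  have hAy : Ak *ᵥ y = μ.im • x + μ.re • y := by
    funext i
    have h1 := congrFun hv i
    simp only [hAkcdef, mulVec, dotProduct, Matrix.map_apply, Pi.smul_apply, smul_eq_mul] at h1
    have h2 := congrArg Complex.im h1
    simp only [Complex.im_sum, Complex.mul_im, Complex.ofReal_re, Complex.ofReal_im,
      zero_mul, mul_zero, add_zero, zero_add] at h2
    simpa [mulVec, dotProduct, hxdef, hydef, mul_comm, add_comm] using h2
  -- symmetry of X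
  have hXt : Xᵀ = X := by
    rw [← Matrix.conjTranspose_eq_transpose_of_trivial]
    exact hX.1
  have hXsymm : ∀ u w : Fin n → ℝ, u ⬝ᵥ (X *ᵥ w) = w ⬝ᵥ (X *ᵥ u) := by
    intro u w
    calc u ⬝ᵥ (X *ᵥ w) = (u ᵥ* X) ⬝ᵥ w := dotProduct_mulVec u X w
      _ = (Xᵀ *ᵥ u) ⬝ᵥ w := by rw [mulVec_transpose]
      _ = (X *ᵥ u) ⬝ᵥ w := by rw [hXt]
      _ = w ⬝ᵥ (X *ᵥ u) := dotProduct_comm _ _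
  have hbil : ∀ u w : Fin n → ℝ, u ⬝ᵥ ((Akᵀ * X + X * Ak) *ᵥ w)
      = (Ak *ᵥ u) ⬝ᵥ (X *ᵥ w) + u ⬝ᵥ (X *ᵥ (Ak *ᵥ w)) := by
    intro u w
    rw [add_mulVec, dotProduct_add, ← Matrix.mulVec_mulVec, ← Matrix.mulVec_mulVec,
      dotProduct_mulVec u Akᵀ, vecMul_transpose]
  have key : x ⬝ᵥ ((Akᵀ * X + X * Ak) *ᵥ x) + y ⬝ᵥ ((Akᵀ * X + X * Ak) *ᵥ y)
      = 2 * μ.re * (x ⬝ᵥ (X *ᵥ x) + y ⬝ᵥ (X *ᵥ y)) := by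
    rw [hbil x x, hbil y y, hAx, hAy]
    simp only [mulVec_sub, mulVec_add, mulVec_smul, sub_dotProduct, add_dotProduct,
      smul_dotProduct, dotProduct_sub, dotProduct_add, dotProduct_smul, smul_eq_mul]
    rw [hXsymm y x]
    ring
  -- Lyapunov rearranged
  have hSneg : Akᵀ * X + X * Ak = -(Cᵀ * Kᵀ * R * K * C) - Q := by
    have h1 : (Akᵀ * X + X * Ak) + (Cᵀ * Kᵀ * R * K * C + Q) = 0 := by
      rw [← add_assoc]; exact hLyap
    have h2 := eq_neg_of_add_eq_zero_left h1
    rw [h2, neg_add, ← sub_eq_add_neg]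
  have hMpsd : (Cᵀ * Kᵀ * R * K * C).PosSemidef := by
    have h0 := hR.posSemidef.conjTranspose_mul_mul_same (K * C)
    simpa [conjTranspose_mul, Matrix.conjTranspose_eq_transpose_of_trivial,
      Matrix.mul_assoc] using h0
  set cS := ⨅ i, hSig.1.eigenvalues i with hcSdef
  set cQ := ⨅ i, hQ.1.eigenvalues i with hcQdef
  -- quadratic form bounds
  have hQlow : ∀ u : Fin n → ℝ, cQ * (u ⬝ᵥ u) ≤ u ⬝ᵥ (Q *ᵥ u) := by
    intro u
    have hpsd := herm_sub_smul_one hQ.1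
      (fun i => ciInf_le (Set.Finite.bddBelow (Set.finite_range _)) i)
    have h0 := psd_dot hpsd u
    rw [sub_mulVec, dotProduct_sub, sub_nonneg, smul_mulVec, one_mulVec,
      dotProduct_smul, smul_eq_mul] at h0
    exact h0
  have htr : X.trace = ∑ i, hX.1.eigenvalues i := trace_eq_sum_eig hX.1
  have hXup : ∀ u : Fin n → ℝ, u ⬝ᵥ (X *ᵥ u) ≤ X.trace * (u ⬝ᵥ u) := by
    intro u
    have hb : ∀ i, hX.1.eigenvalues i ≤ X.trace := by
      intro i
      rw [htr]
      exact Finset.single_le_sum (fun j _ => (hX.eigenvalues_pos j).le) (Finset.mem_univ i)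
    have hpsd := herm_smul_one_sub hX.1 hb
    have h0 := psd_dot hpsd u
    rw [sub_mulVec, dotProduct_sub, sub_nonneg, smul_mulVec, one_mulVec,
      dotProduct_smul, smul_eq_mul] at h0
    exact h0
  -- positivity of the norm
  have hN : 0 < x ⬝ᵥ x + y ⬝ᵥ y := by
    obtain ⟨i, hi⟩ := Function.ne_iff.mp hv0
    have hxy : x i ≠ 0 ∨ y i ≠ 0 := by
      by_contra hc
      push_neg at hc
      exact hi (Complex.ext (by simpa using hc.1) (by simpa using hc.2))
    have hx2 : x i * x i ≤ x ⬝ᵥ x :=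
      Finset.single_le_sum (f := fun j => x j * x j) (fun j _ => mul_self_nonneg _)
        (Finset.mem_univ i)
    have hy2 : y i * y i ≤ y ⬝ᵥ y :=
      Finset.single_le_sum (f := fun j => y j * y j) (fun j _ => mul_self_nonneg _)
        (Finset.mem_univ i)
    rcases hxy with h | h
    · nlinarith [mul_self_nonneg (y i), mul_self_pos.mpr h]
    · nlinarith [mul_self_nonneg (x i), mul_self_pos.mpr h]
  -- combine Lyapunov with the eigenvector identity
  have hqq : x ⬝ᵥ (Q *ᵥ x) + y ⬝ᵥ (Q *ᵥ y)
      ≤ -(2 * μ.re) * (x ⬝ᵥ (X *ᵥ x) + y ⬝ᵥ (X *ᵥ y)) := by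
    have e1 : x ⬝ᵥ ((Akᵀ * X + X * Ak) *ᵥ x)
        = -(x ⬝ᵥ ((Cᵀ * Kᵀ * R * K * C) *ᵥ x)) - x ⬝ᵥ (Q *ᵥ x) := by
      rw [hSneg, sub_mulVec, neg_mulVec, dotProduct_sub, dotProduct_neg]
    have e2 : y ⬝ᵥ ((Akᵀ * X + X * Ak) *ᵥ y)
        = -(y ⬝ᵥ ((Cᵀ * Kᵀ * R * K * C) *ᵥ y)) - y ⬝ᵥ (Q *ᵥ y) := by
      rw [hSneg, sub_mulVec, neg_mulVec, dotProduct_sub, dotProduct_neg]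
    have hm1 := psd_dot hMpsd x
    have hm2 := psd_dot hMpsd y
    nlinarith [key, e1, e2]
  -- cQ ≤ -2 μ.re * trace X
  have h2 : cQ ≤ -(2 * μ.re) * X.trace := by
    have hW : x ⬝ᵥ (X *ᵥ x) + y ⬝ᵥ (X *ᵥ y) ≤ X.trace * (x ⬝ᵥ x + y ⬝ᵥ y) := by
      have := hXup x
      have := hXup y
      nlinarith
    have hmul := mul_le_mul_of_nonneg_left hW (show (0:ℝ) ≤ -(2 * μ.re) by linarith)
    have h3 : cQ * (x ⬝ᵥ x + y ⬝ᵥ y) ≤ (-(2 * μ.re) * X.trace) * (x ⬝ᵥ x + y ⬝ᵥ y) := by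
      have := hQlow x
      have := hQlow y
      nlinarith
    exact le_of_mul_le_mul_right h3 hN
  -- cS * trace X ≤ trace (X * Sig)
  have h1 : cS * X.trace ≤ (X * Sig).trace := by
    have hpsd := herm_sub_smul_one hSig.1
      (fun i => ciInf_le (Set.Finite.bddBelow (Set.finite_range _)) i)
    have h0 := trace_mul_psd_nonneg hX.posSemidef hpsd
    rw [Matrix.mul_sub, Matrix.trace_sub, sub_nonneg, Matrix.mul_smul, Matrix.mul_one,
      Matrix.trace_smul] at h0
    simpa [smul_eq_mul] using h0
  have hcS0 : (0:ℝ) ≤ cS := le_ciInf fun i => (hSig.eigenvalues_pos i).le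
  have hTr0 : (0:ℝ) ≤ X.trace := by
    rw [htr]
    exact Finset.sum_nonneg fun i _ => (hX.eigenvalues_pos i).le
  rw [div_le_iff₀ (by linarith : (0:ℝ) < -2 * s)]
  have hsa : μ.re = s := hμre
  rw [← hsa]
  nlinarith [mul_le_mul_of_nonneg_left h2 hcS0,
    mul_le_mul_of_nonneg_left h1 (show (0:ℝ) ≤ -(2 * μ.re) by linarith)]
end

section
/- Under the same setting, the LQR cost satisfies the lower bound f(K) ≥ λ₁(Σ) λ₁(R) ‖K‖_F² λ₁(CCᵀ) / (2‖A‖ + 2‖K‖_F ‖B‖ ‖C‖). Consequently f is coercive in ‖K‖_F when λ₁(CCᵀ) > 0. -/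
open Matrix

/-- Frobenius norm of a real matrix. -/
noncomputable def frobNorm {m n : ℕ} (A : Matrix (Fin m) (Fin n) ℝ) : ℝ :=
  Real.sqrt (∑ i, ∑ j, (A i j) ^ 2)

section Aux

open scoped Matrix.Norms.L2Operator

lemma specNorm_eq {m n : ℕ} (A : Matrix (Fin m) (Fin n) ℝ) : specNorm A = ‖A‖ := rfl

lemma specNorm_nonneg {m n : ℕ} (A : Matrix (Fin m) (Fin n) ℝ) : 0 ≤ specNorm A := by
  rw [specNorm_eq]; exact norm_nonneg _

lemma specNorm_neg {m n : ℕ} (A : Matrix (Fin m) (Fin n) ℝ) : specNorm (-A) = specNorm A := by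
  rw [specNorm_eq, specNorm_eq]; exact norm_neg _

lemma specNorm_eq_zero {m n : ℕ} {A : Matrix (Fin m) (Fin n) ℝ} (h : specNorm A = 0) :
    A = 0 := by
  rw [specNorm_eq, norm_eq_zero] at h
  exact h

lemma frobNorm_nonneg {m n : ℕ} (A : Matrix (Fin m) (Fin n) ℝ) : 0 ≤ frobNorm A :=
  Real.sqrt_nonneg _

lemma frobNorm_sq {m n : ℕ} (A : Matrix (Fin m) (Fin n) ℝ) :
    frobNorm A ^ 2 = ∑ i, ∑ j, A i j ^ 2 := Real.sq_sqrt (by positivity)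

lemma trace_transpose_mul_self {m n : ℕ} (A : Matrix (Fin m) (Fin n) ℝ) :
    (Aᵀ * A).trace = frobNorm A ^ 2 := by
  rw [frobNorm_sq, Matrix.trace]
  simp only [Matrix.diag, Matrix.mul_apply, Matrix.transpose_apply, sq]
  exact Finset.sum_comm

lemma psd_diag_nonneg {k : ℕ} {P : Matrix (Fin k) (Fin k) ℝ} (hP : P.PosSemidef) (i : Fin k) :
    0 ≤ P i i := by
  exact hP.diag_nonneg

lemma psd_trace_nonneg {k : ℕ} {P : Matrix (Fin k) (Fin k) ℝ} (hP : P.PosSemidef) :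
    0 ≤ P.trace :=
  Finset.sum_nonneg fun i _ => psd_diag_nonneg hP i

lemma trace_mul_nonneg {k : ℕ} {M N : Matrix (Fin k) (Fin k) ℝ}
    (hM : M.PosSemidef) (hN : N.PosSemidef) : 0 ≤ (M * N).trace := by
  open scoped MatrixOrder in
  obtain ⟨B, rfl⟩ : ∃ B : Matrix (Fin k) (Fin k) ℝ, N = Bᴴ * B :=
    CStarAlgebra.nonneg_iff_eq_star_mul_self.mp hN.nonneg
  rw [← mul_assoc, Matrix.trace_mul_cycle]
  exact psd_trace_nonneg (hM.mul_mul_conjTranspose_same B)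

lemma sub_smul_one_posSemidef {k : ℕ} {M : Matrix (Fin k) (Fin k) ℝ} (hM : M.IsHermitian)
    {c : ℝ} (hc : ∀ i, c ≤ hM.eigenvalues i) : (M - c • 1).PosSemidef := by
  have hU : (hM.eigenvectorUnitary : Matrix (Fin k) (Fin k) ℝ) *
      star (hM.eigenvectorUnitary : Matrix (Fin k) (Fin k) ℝ) = 1 :=
    Matrix.mem_unitaryGroup_iff.mp hM.eigenvectorUnitary.2
  have key : M - c • 1 = (hM.eigenvectorUnitary : Matrix (Fin k) (Fin k) ℝ) *
      (Matrix.diagonal (fun i => hM.eigenvalues i - c)) *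
      star (hM.eigenvectorUnitary : Matrix (Fin k) (Fin k) ℝ) := by
    nth_rewrite 1 [hM.spectral_theorem]
    rw [Unitary.conjStarAlgAut_apply]
    have h1 : (c • (1 : Matrix (Fin k) (Fin k) ℝ)) =
        (hM.eigenvectorUnitary : Matrix (Fin k) (Fin k) ℝ) * (c • 1) *
        star (hM.eigenvectorUnitary : Matrix (Fin k) (Fin k) ℝ) := by
      rw [Matrix.mul_smul, Matrix.mul_one, Matrix.smul_mul, hU]
    rw [h1, ← Matrix.sub_mul, ← Matrix.mul_sub]
    congr 1
    congr 1
    ext i j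
    by_cases h : i = j <;>
      simp [Matrix.diagonal, Matrix.one_apply, h, RCLike.ofReal, Matrix.sub_apply, Matrix.smul_apply]
  rw [key]
  exact (Matrix.PosSemidef.diagonal (fun i => sub_nonneg.mpr (hc i))).mul_mul_conjTranspose_same _

/-- generic eigenvalue-min trace bound -/
lemma le_trace_mul {k : ℕ} {M P : Matrix (Fin k) (Fin k) ℝ} (hM : M.IsHermitian)
    (hP : P.PosSemidef) {c : ℝ} (hc : ∀ i, c ≤ hM.eigenvalues i) :
    c * P.trace ≤ (M * P).trace := by
  have h := trace_mul_nonneg (sub_smul_one_posSemidef hM hc) hP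
  rw [Matrix.sub_mul, Matrix.smul_mul, Matrix.one_mul, Matrix.trace_sub, Matrix.trace_smul] at h
  simp only [smul_eq_mul] at h
  linarith

lemma dot_mulVec_le {k : ℕ} (M : Matrix (Fin k) (Fin k) ℝ) (v : Fin k → ℝ) :
    v ⬝ᵥ (M *ᵥ v) ≤ specNorm M * ∑ j, v j ^ 2 := by
  classical
  set ev : EuclideanSpace ℝ (Fin k) := (WithLp.equiv 2 _).symm v with hev
  set ew : EuclideanSpace ℝ (Fin k) := (WithLp.equiv 2 _).symm (M *ᵥ v) with hew
  have h1 : v ⬝ᵥ (M *ᵥ v) = (inner ℝ ev ew : ℝ) := by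
    simp [PiLp.inner_apply, dotProduct, hev, hew, mul_comm]
  have hnv : ‖ev‖ ^ 2 = ∑ j, v j ^ 2 := by
    rw [EuclideanSpace.norm_eq]
    rw [Real.sq_sqrt (by positivity)]
    simp [hev, sq_abs]
  have h2 : ‖ew‖ ≤ specNorm M * ‖ev‖ := by
    have : ew = (LinearMap.toContinuousLinearMap (Matrix.toEuclideanLin M)) ev := by
      simp [hev, hew]
    rw [this, specNorm]
    exact (LinearMap.toContinuousLinearMap (Matrix.toEuclideanLin M)).le_opNorm ev
  calc v ⬝ᵥ (M *ᵥ v) = (inner ℝ ev ew : ℝ) := h1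
    _ ≤ ‖ev‖ * ‖ew‖ := real_inner_le_norm ev ew
    _ ≤ ‖ev‖ * (specNorm M * ‖ev‖) := mul_le_mul_of_nonneg_left h2 (norm_nonneg _)
    _ = specNorm M * ‖ev‖ ^ 2 := by ring
    _ = specNorm M * ∑ j, v j ^ 2 := by rw [hnv]

lemma specNorm_le_frobNorm {a b : ℕ} (K : Matrix (Fin a) (Fin b) ℝ) :
    specNorm K ≤ frobNorm K := by
  rw [specNorm]
  refine ContinuousLinearMap.opNorm_le_bound _ (Real.sqrt_nonneg _) fun x => ?_
  set v : Fin b → ℝ := WithLp.equiv 2 _ x with hv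
  have hx : x = (WithLp.equiv 2 _).symm v := by simp [hv]
  have happ : (LinearMap.toContinuousLinearMap (Matrix.toEuclideanLin K)) x =
      (WithLp.equiv 2 _).symm (K *ᵥ v) := by
    rw [hx]; simp
  rw [happ]
  have hxnorm : ‖x‖ = Real.sqrt (∑ j, v j ^ 2) := by
    rw [hx, EuclideanSpace.norm_eq]; simp [sq_abs]
  rw [EuclideanSpace.norm_eq, hxnorm]
  simp only [WithLp.equiv_symm_apply, PiLp.toLp_apply, Real.norm_eq_abs, sq_abs]
  rw [frobNorm, ← Real.sqrt_mul (by positivity)]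
  apply Real.sqrt_le_sqrt
  calc ∑ i, (K *ᵥ v) i ^ 2 ≤ ∑ i, (∑ j, K i j ^ 2) * (∑ j, v j ^ 2) := by
        refine Finset.sum_le_sum fun i _ => ?_
        simpa [Matrix.mulVec, dotProduct] using
          Finset.sum_mul_sq_le_sq_mul_sq Finset.univ (fun j => K i j) v
    _ = (∑ i, ∑ j, K i j ^ 2) * (∑ j, v j ^ 2) := by rw [← Finset.sum_mul]

lemma trace_mul_le_specNorm {k : ℕ} {X : Matrix (Fin k) (Fin k) ℝ} (hX : X.PosSemidef)
    (M : Matrix (Fin k) (Fin k) ℝ) : (X * M).trace ≤ specNorm M * X.trace := by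
  open scoped MatrixOrder in
  obtain ⟨B, rfl⟩ : ∃ B : Matrix (Fin k) (Fin k) ℝ, X = Bᴴ * B :=
    CStarAlgebra.nonneg_iff_eq_star_mul_self.mp hX.nonneg
  have h1 : (Bᴴ * B * M).trace = (B * M * Bᴴ).trace := by
    rw [Matrix.trace_mul_cycle, Matrix.trace_mul_cycle, mul_assoc]
  have h2 : (Bᴴ * B).trace = ∑ i, ∑ j, B i j ^ 2 := by
    rw [Matrix.conjTranspose_eq_transpose_of_trivial, Matrix.trace]
    simp only [Matrix.diag, Matrix.mul_apply, Matrix.transpose_apply, sq]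
    exact Finset.sum_comm
  have h3 : ∀ i, (B * M * Bᴴ) i i = (fun j => B i j) ⬝ᵥ (M *ᵥ fun j => B i j) := by
    intro i
    simp only [Matrix.conjTranspose_eq_transpose_of_trivial, Matrix.mul_apply,
      Matrix.transpose_apply, dotProduct, Matrix.mulVec, Finset.mul_sum,
      Finset.sum_mul]
    rw [Finset.sum_comm]
    congr 1; ext l; congr 1; ext j; ring
  rw [h1, Matrix.trace, h2]
  calc ∑ i, (B * M * Bᴴ).diag i ≤ ∑ i, specNorm M * ∑ j, B i j ^ 2 := by
        refine Finset.sum_le_sum fun i _ => ?_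
        rw [Matrix.diag, h3 i]
        exact dot_mulVec_le M _
    _ = specNorm M * ∑ i, ∑ j, B i j ^ 2 := by rw [Finset.mul_sum]

lemma specNorm_triangle_bound {n m r : ℕ} (A : Matrix (Fin n) (Fin n) ℝ)
    (B : Matrix (Fin n) (Fin m) ℝ) (C : Matrix (Fin r) (Fin n) ℝ)
    (K : Matrix (Fin m) (Fin r) ℝ) :
    specNorm (A - B * K * C) ≤ specNorm A + frobNorm K * specNorm B * specNorm C := by
  simp only [specNorm_eq]
  have h0 : ‖A - B * K * C‖ ≤ ‖A‖ + ‖B * K * C‖ := norm_sub_le _ _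
  have h1 : ‖B * K * C‖ ≤ ‖B * K‖ * ‖C‖ := Matrix.l2_opNorm_mul _ _
  have h2 : ‖B * K‖ ≤ ‖B‖ * ‖K‖ := Matrix.l2_opNorm_mul _ _
  have h3 : ‖K‖ ≤ frobNorm K := specNorm_le_frobNorm K
  have h4 : ‖B * K‖ * ‖C‖ ≤ ‖B‖ * ‖K‖ * ‖C‖ :=
    mul_le_mul_of_nonneg_right h2 (norm_nonneg _)
  have h5 : ‖B‖ * ‖K‖ * ‖C‖ ≤ ‖B‖ * frobNorm K * ‖C‖ :=
    mul_le_mul_of_nonneg_right (mul_le_mul_of_nonneg_left h3 (norm_nonneg B)) (norm_nonneg _)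
  have h6 : ‖B‖ * frobNorm K * ‖C‖ = frobNorm K * ‖B‖ * ‖C‖ := by ring
  linarith

end Aux

lemma key_part1 {n m r : ℕ}
    (A : Matrix (Fin n) (Fin n) ℝ) (B : Matrix (Fin n) (Fin m) ℝ)
    (C : Matrix (Fin r) (Fin n) ℝ)
    (Sig Q : Matrix (Fin n) (Fin n) ℝ) (R : Matrix (Fin m) (Fin m) ℝ)
    (hSig : Sig.PosDef) (hQ : Q.PosDef) (hR : R.PosDef)
    (hCC : (C * Cᵀ).IsHermitian)
    (K : Matrix (Fin m) (Fin r) ℝ) (X : Matrix (Fin n) (Fin n) ℝ)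
    (hX : X.PosDef)
    (hLyap : (A - B * K * C)ᵀ * X + X * (A - B * K * C) + Cᵀ * Kᵀ * R * K * C + Q = 0) :
    (⨅ i, hSig.1.eigenvalues i) * (⨅ i, hR.1.eigenvalues i) * frobNorm K ^ 2 *
        (⨅ i, hCC.eigenvalues i) /
        (2 * specNorm A + 2 * frobNorm K * specNorm B * specNorm C)
      ≤ (X * Sig).trace := by
  classical
  have hXpsd := hX.posSemidef
  have hSpsd := hSig.posSemidef
  have hCCpsd : (C * Cᵀ).PosSemidef := by
    have := Matrix.posSemidef_self_mul_conjTranspose C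
    rwa [Matrix.conjTranspose_eq_transpose_of_trivial] at this
  have hKKpsd : (Kᵀ * K).PosSemidef := by
    have := Matrix.posSemidef_conjTranspose_mul_self K
    rwa [Matrix.conjTranspose_eq_transpose_of_trivial] at this
  have hKCpsd : ((K * C) * (Cᵀ * Kᵀ)).PosSemidef := by
    have := Matrix.posSemidef_self_mul_conjTranspose (K * C)
    rwa [Matrix.conjTranspose_eq_transpose_of_trivial, Matrix.transpose_mul] at this
  have hlS0 : 0 ≤ ⨅ i, hSig.1.eigenvalues i :=
    Real.iInf_nonneg fun i => hSpsd.eigenvalues_nonneg i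
  have hlR0 : 0 ≤ ⨅ i, hR.1.eigenvalues i :=
    Real.iInf_nonneg fun i => hR.posSemidef.eigenvalues_nonneg i
  have hlCC0 : 0 ≤ ⨅ i, hCC.eigenvalues i :=
    Real.iInf_nonneg fun i => hCCpsd.eigenvalues_nonneg i
  have hciS : ∀ i, (⨅ i, hSig.1.eigenvalues i) ≤ hSig.1.eigenvalues i :=
    fun i => ciInf_le (Finite.bddBelow_range _) i
  have hciR : ∀ i, (⨅ i, hR.1.eigenvalues i) ≤ hR.1.eigenvalues i :=
    fun i => ciInf_le (Finite.bddBelow_range _) i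
  have hciCC : ∀ i, (⨅ i, hCC.eigenvalues i) ≤ hCC.eigenvalues i :=
    fun i => ciInf_le (Finite.bddBelow_range _) i
  have hTrX : 0 ≤ X.trace := psd_trace_nonneg hXpsd
  have hfK0 : 0 ≤ frobNorm K := frobNorm_nonneg K
  have hd0 : 0 ≤ 2 * specNorm A + 2 * frobNorm K * specNorm B * specNorm C := by
    have h1 := specNorm_nonneg A; have h2 := specNorm_nonneg B; have h3 := specNorm_nonneg C
    positivity
  have hXt : Xᵀ = X := by
    rw [← Matrix.conjTranspose_eq_transpose_of_trivial]; exact hX.isHermitian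
  have htr0 := congrArg Matrix.trace hLyap
  rw [Matrix.trace_add, Matrix.trace_add, Matrix.trace_add, Matrix.trace_zero] at htr0
  have hT : ((A - B * K * C)ᵀ * X).trace = (X * (A - B * K * C)).trace := by
    rw [← Matrix.trace_transpose (X * (A - B * K * C)), Matrix.transpose_mul, hXt]
  have hXAcl : (X * -(A - B * K * C)).trace ≤
      (specNorm A + frobNorm K * specNorm B * specNorm C) * X.trace := by
    have h1 := trace_mul_le_specNorm hXpsd (-(A - B * K * C))
    have h2 : specNorm (-(A - B * K * C)) = specNorm (A - B * K * C) := specNorm_neg _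
    have h3 := specNorm_triangle_bound A B C K
    have h4 : specNorm (-(A - B * K * C)) * X.trace ≤
        (specNorm A + frobNorm K * specNorm B * specNorm C) * X.trace := by
      rw [h2]; exact mul_le_mul_of_nonneg_right h3 hTrX
    linarith
  have hneg : (X * -(A - B * K * C)).trace = -(X * (A - B * K * C)).trace := by
    rw [Matrix.mul_neg, Matrix.trace_neg]
  have hQtr : 0 ≤ Q.trace := psd_trace_nonneg hQ.posSemidef
  have hStr_le : (Cᵀ * Kᵀ * R * K * C).trace ≤
      (2 * specNorm A + 2 * frobNorm K * specNorm B * specNorm C) * X.trace := by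
    have hdX : (2 * specNorm A + 2 * frobNorm K * specNorm B * specNorm C) * X.trace =
        2 * ((specNorm A + frobNorm K * specNorm B * specNorm C) * X.trace) := by ring
    rw [hdX]
    linarith [hXAcl, hneg, htr0, hT, hQtr]
  have hStr_ge : (⨅ i, hR.1.eigenvalues i) *
      ((⨅ i, hCC.eigenvalues i) * frobNorm K ^ 2) ≤ (Cᵀ * Kᵀ * R * K * C).trace := by
    have ha : (Cᵀ * Kᵀ * R * K * C).trace = (R * ((K * C) * (Cᵀ * Kᵀ))).trace := by
      rw [Matrix.mul_assoc (Cᵀ * Kᵀ * R) K C, Matrix.trace_mul_cycle (Cᵀ * Kᵀ) R (K * C),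
        Matrix.trace_mul_comm]
    have hb : ((K * C) * (Cᵀ * Kᵀ)).trace = ((C * Cᵀ) * (Kᵀ * K)).trace := by
      have he : (K * C) * (Cᵀ * Kᵀ) = K * (C * Cᵀ) * Kᵀ := by
        simp only [Matrix.mul_assoc]
      rw [he, Matrix.trace_mul_cycle K (C * Cᵀ) Kᵀ, Matrix.trace_mul_comm]
    have hc1 : (⨅ i, hCC.eigenvalues i) * (Kᵀ * K).trace ≤
        ((C * Cᵀ) * (Kᵀ * K)).trace := le_trace_mul hCC hKKpsd hciCC
    have hc2 : (Kᵀ * K).trace = frobNorm K ^ 2 := trace_transpose_mul_self K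
    have hc3 : (⨅ i, hR.1.eigenvalues i) * ((K * C) * (Cᵀ * Kᵀ)).trace ≤
        (R * ((K * C) * (Cᵀ * Kᵀ))).trace := le_trace_mul hR.1 hKCpsd hciR
    have hc4 : (⨅ i, hCC.eigenvalues i) * frobNorm K ^ 2 ≤
        ((K * C) * (Cᵀ * Kᵀ)).trace := by rw [hb, ← hc2]; exact hc1
    calc (⨅ i, hR.1.eigenvalues i) * ((⨅ i, hCC.eigenvalues i) * frobNorm K ^ 2)
        ≤ (⨅ i, hR.1.eigenvalues i) * ((K * C) * (Cᵀ * Kᵀ)).trace :=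
          mul_le_mul_of_nonneg_left hc4 hlR0
      _ ≤ (R * ((K * C) * (Cᵀ * Kᵀ))).trace := hc3
      _ = (Cᵀ * Kᵀ * R * K * C).trace := ha.symm
  have hSigtr : (⨅ i, hSig.1.eigenvalues i) * X.trace ≤ (X * Sig).trace := by
    have := le_trace_mul hSig.1 hXpsd hciS
    rwa [Matrix.trace_mul_comm] at this
  rcases eq_or_lt_of_le hd0 with hdz | hdp
  · rw [← hdz, div_zero]
    exact trace_mul_nonneg hXpsd hSpsd
  · rw [div_le_iff₀ hdp]
    calc (⨅ i, hSig.1.eigenvalues i) * (⨅ i, hR.1.eigenvalues i) * frobNorm K ^ 2 *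
        (⨅ i, hCC.eigenvalues i)
        = (⨅ i, hSig.1.eigenvalues i) *
          ((⨅ i, hR.1.eigenvalues i) * ((⨅ i, hCC.eigenvalues i) * frobNorm K ^ 2)) := by ring
      _ ≤ (⨅ i, hSig.1.eigenvalues i) * (Cᵀ * Kᵀ * R * K * C).trace :=
          mul_le_mul_of_nonneg_left hStr_ge hlS0
      _ ≤ (⨅ i, hSig.1.eigenvalues i) *
          ((2 * specNorm A + 2 * frobNorm K * specNorm B * specNorm C) * X.trace) :=
          mul_le_mul_of_nonneg_left hStr_le hlS0
      _ = (2 * specNorm A + 2 * frobNorm K * specNorm B * specNorm C) *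
          ((⨅ i, hSig.1.eigenvalues i) * X.trace) := by ring
      _ ≤ (2 * specNorm A + 2 * frobNorm K * specNorm B * specNorm C) * (X * Sig).trace :=
          mul_le_mul_of_nonneg_left hSigtr hdp.le
      _ = (X * Sig).trace * (2 * specNorm A + 2 * frobNorm K * specNorm B * specNorm C) := by
          ring

lemma key_part2 {n m r : ℕ}
    (A : Matrix (Fin n) (Fin n) ℝ) (B : Matrix (Fin n) (Fin m) ℝ)
    (C : Matrix (Fin r) (Fin n) ℝ)
    (Sig Q : Matrix (Fin n) (Fin n) ℝ) (R : Matrix (Fin m) (Fin m) ℝ)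
    (hSig : Sig.PosDef) (hQ : Q.PosDef) (hR : R.PosDef)
    (hCC : (C * Cᵀ).IsHermitian)
    (hrank : C.rank = r)
    (hpos : 0 < ⨅ i, hCC.eigenvalues i)
    (K : ℕ → Matrix (Fin m) (Fin r) ℝ) (X : ℕ → Matrix (Fin n) (Fin n) ℝ)
    (hHur : ∀ j, IsHurwitz (A - B * K j * C)) (hXpd : ∀ j, (X j).PosDef)
    (hLyap : ∀ j, (A - B * K j * C)ᵀ * X j + X j * (A - B * K j * C)
        + Cᵀ * (K j)ᵀ * R * K j * C + Q = 0)
    (hfrob : Filter.Tendsto (fun j => frobNorm (K j)) Filter.atTop Filter.atTop) :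
    Filter.Tendsto (fun j => (X j * Sig).trace) Filter.atTop Filter.atTop := by
  classical
  have hr : 0 < r := by
    rcases Nat.eq_zero_or_pos r with h0 | h; swap; · exact h
    exfalso; subst h0
    rw [Real.iInf_of_isEmpty] at hpos
    exact lt_irrefl 0 hpos
  have hn : 0 < n := by
    have h1 := C.rank_le_card_width
    rw [hrank] at h1
    simpa using lt_of_lt_of_le hr (by simpa using h1)
  have hm : 0 < m := by
    rcases Nat.eq_zero_or_pos m with h0 | h; swap; · exact h
    exfalso; subst h0
    have hz : ∀ j, frobNorm (K j) = 0 := fun j => by simp [frobNorm]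
    obtain ⟨j, hj⟩ := (hfrob.eventually (Filter.eventually_ge_atTop 1)).exists
    rw [hz j] at hj; linarith
  haveI : Nonempty (Fin n) := ⟨⟨0, hn⟩⟩
  haveI : Nonempty (Fin m) := ⟨⟨0, hm⟩⟩
  haveI : Nonempty (Fin r) := ⟨⟨0, hr⟩⟩
  have hlS : 0 < ⨅ i, hSig.1.eigenvalues i := by
    obtain ⟨i0, _, hi0⟩ := Finset.exists_min_image Finset.univ
      (fun i => hSig.1.eigenvalues i) ⟨⟨0, hn⟩, Finset.mem_univ _⟩
    exact lt_of_lt_of_le (hSig.eigenvalues_pos i0)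
      (le_ciInf fun j => hi0 j (Finset.mem_univ _))
  have hlR : 0 < ⨅ i, hR.1.eigenvalues i := by
    obtain ⟨i0, _, hi0⟩ := Finset.exists_min_image Finset.univ
      (fun i => hR.1.eigenvalues i) ⟨⟨0, hm⟩, Finset.mem_univ _⟩
    exact lt_of_lt_of_le (hR.eigenvalues_pos i0)
      (le_ciInf fun j => hi0 j (Finset.mem_univ _))
  have hciCC : ∀ i, (⨅ i, hCC.eigenvalues i) ≤ hCC.eigenvalues i :=
    fun i => ciInf_le (Finite.bddBelow_range _) i
  have hDE : 0 < 2 * specNorm A + 2 * specNorm B * specNorm C := by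
    by_contra hcon
    push_neg at hcon
    have hA0 : specNorm A = 0 := by
      nlinarith [specNorm_nonneg A, specNorm_nonneg B, specNorm_nonneg C]
    have hBC : specNorm B * specNorm C = 0 := by
      nlinarith [specNorm_nonneg A, specNorm_nonneg B, specNorm_nonneg C]
    rcases mul_eq_zero.mp hBC with hB0 | hC0
    · -- B = 0 and A = 0: closed loop is the zero matrix, not Hurwitz
      have hA : A = 0 := specNorm_eq_zero hA0
      have hB : B = 0 := specNorm_eq_zero hB0
      have hAcl : A - B * K 0 * C = 0 := by rw [hA, hB]; simp
      have hh := hHur 0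
      rw [hAcl] at hh
      have h5 : (0 : ℂ) ∈ spectrum ℂ ((0 : Matrix (Fin n) (Fin n) ℝ).map Complex.ofReal) := by
        have hmap : ((0 : Matrix (Fin n) (Fin n) ℝ).map Complex.ofReal) = 0 :=
          Matrix.map_zero Complex.ofReal Complex.ofReal_zero
        rw [hmap, spectrum.mem_iff]
        intro hu
        rw [map_zero, sub_zero, Matrix.isUnit_iff_isUnit_det,
          Matrix.det_zero] at hu
        simpa using hu
      have := hh 0 h5
      simp at this
    · -- C = 0 contradicts positivity of the smallest eigenvalue of C Cᵀ
      have hC : C = 0 := specNorm_eq_zero hC0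
      have h1 := le_trace_mul hCC (Matrix.PosSemidef.one
        (n := Fin r) (R := ℝ)) hciCC
      have h2 : ((C * Cᵀ) * 1).trace = 0 := by
        rw [Matrix.mul_one]
        have : C * Cᵀ = 0 := by rw [hC]; simp
        rw [this, Matrix.trace_zero]
      rw [h2, Matrix.trace_one] at h1
      have h3 : (0 : ℝ) < (⨅ i, hCC.eigenvalues i) * (Fintype.card (Fin r) : ℝ) := by
        apply mul_pos hpos
        simpa using hr
      linarith
  set lS := ⨅ i, hSig.1.eigenvalues i
  set lR := ⨅ i, hR.1.eigenvalues i
  set lCC := ⨅ i, hCC.eigenvalues i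
  have hφ : Filter.Tendsto (fun t : ℝ => lS * lR * t ^ 2 * lCC /
      (2 * specNorm A + 2 * t * specNorm B * specNorm C)) Filter.atTop Filter.atTop := by
    have hp : 0 < lS * lR * lCC := mul_pos (mul_pos hlS hlR) hpos
    apply Filter.tendsto_atTop_mono' Filter.atTop
      (show (fun t : ℝ => (lS * lR * lCC / (2 * specNorm A + 2 * specNorm B * specNorm C)) * t)
          ≤ᶠ[Filter.atTop] _ from ?_)
      (Filter.Tendsto.const_mul_atTop (div_pos hp hDE) Filter.tendsto_id)
    filter_upwards [Filter.eventually_ge_atTop 1] with t ht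
    have ht0 : (0 : ℝ) < t := lt_of_lt_of_le zero_lt_one ht
    have hden_pos : 0 < 2 * specNorm A + 2 * t * specNorm B * specNorm C := by
      nlinarith [hDE, specNorm_nonneg A, specNorm_nonneg B, specNorm_nonneg C,
        mul_nonneg (mul_nonneg (specNorm_nonneg B) (specNorm_nonneg C)) (sub_nonneg.mpr ht)]
    have hden_le : 2 * specNorm A + 2 * t * specNorm B * specNorm C ≤
        (2 * specNorm A + 2 * specNorm B * specNorm C) * t := by
      nlinarith [specNorm_nonneg A, specNorm_nonneg B, specNorm_nonneg C,
        mul_nonneg (specNorm_nonneg A) (sub_nonneg.mpr ht)]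
    have hnum : 0 ≤ lS * lR * t ^ 2 * lCC := by positivity
    calc (lS * lR * lCC / (2 * specNorm A + 2 * specNorm B * specNorm C)) * t
        = (lS * lR * t ^ 2 * lCC) /
          ((2 * specNorm A + 2 * specNorm B * specNorm C) * t) := by
          field_simp
      _ ≤ (lS * lR * t ^ 2 * lCC) /
          (2 * specNorm A + 2 * t * specNorm B * specNorm C) := by
          gcongr
      _ = _ := rfl
  apply Filter.tendsto_atTop_mono _ (hφ.comp hfrob)
  intro j
  exact key_part1 A B C Sig Q R hSig hQ hR hCC (K j) (X j) (hXpd j) (hLyap j)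

theorem stmt_12 {n m r : ℕ}
    (A : Matrix (Fin n) (Fin n) ℝ) (B : Matrix (Fin n) (Fin m) ℝ)
    (C : Matrix (Fin r) (Fin n) ℝ)
    (Sig Q : Matrix (Fin n) (Fin n) ℝ) (R : Matrix (Fin m) (Fin m) ℝ)
    (hSig : Sig.PosDef) (hQ : Q.PosDef) (hR : R.PosDef)
    (hCC : (C * Cᵀ).IsHermitian)
    (hrank : C.rank = r) :
    (∀ (K : Matrix (Fin m) (Fin r) ℝ) (X : Matrix (Fin n) (Fin n) ℝ),
      IsHurwitz (A - B * K * C) → X.PosDef →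
      (A - B * K * C)ᵀ * X + X * (A - B * K * C) + Cᵀ * Kᵀ * R * K * C + Q = 0 →
      (⨅ i, hSig.1.eigenvalues i) * (⨅ i, hR.1.eigenvalues i) * frobNorm K ^ 2 *
          (⨅ i, hCC.eigenvalues i) /
          (2 * specNorm A + 2 * frobNorm K * specNorm B * specNorm C)
        ≤ (X * Sig).trace) ∧
    (0 < ⨅ i, hCC.eigenvalues i →
      ∀ (K : ℕ → Matrix (Fin m) (Fin r) ℝ) (X : ℕ → Matrix (Fin n) (Fin n) ℝ),
        (∀ j, IsHurwitz (A - B * K j * C)) → (∀ j, (X j).PosDef) →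
        (∀ j, (A - B * K j * C)ᵀ * X j + X j * (A - B * K j * C)
            + Cᵀ * (K j)ᵀ * R * K j * C + Q = 0) →
        Filter.Tendsto (fun j => frobNorm (K j)) Filter.atTop Filter.atTop →
        Filter.Tendsto (fun j => (X j * Sig).trace) Filter.atTop Filter.atTop) := by
  constructor
  · intro K X _ hX hLyap
    exact key_part1 A B C Sig Q R hSig hQ hR hCC K X hX hLyap
  · intro hpos K X hHur hXpd hLyap hfrob
    exact key_part2 A B C Sig Q R hSig hQ hR hCC hrank hpos K X hHur hXpd hLyap hfrob
end

section
/- Let f : ℝⁿ → ℝ be twice continuously differentiable, μ-strongly convex, with L-Lipschitz gradient. For the damped Newton–step-size gradient method x_{j+1} = x_j − σγ_j ∇f(x_j), where γ_j = ‖∇f(x_j)‖² / ⟨∇²f(x_j)∇f(x_j), ∇f(x_j)⟩ and 0 < σ ≤ μ/L, one has f(x_{j+1}) − f(x*) ≤ (1 − μσ/L)(f(x_j) − f(x*)) for every j, where x* is the unique minimizer. -/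
open scoped RealInnerProductSpace

private lemma quad_upper (φ p q : ℝ → ℝ) (c : ℝ)
    (hφ : ∀ t, HasDerivAt φ (p t) t)
    (hp : ∀ t, HasDerivAt p (q t) t)
    (hq : ∀ t, q t ≤ c) :
    φ 1 ≤ φ 0 + p 0 + c / 2 := by
  have h1 : ∀ t : ℝ, 0 ≤ t → p t - p 0 - c * t ≤ 0 := by
    have hr : ∀ t, HasDerivAt (fun s => p s - p 0 - c * s) (q t - c) t := by
      intro t
      exact (((hp t).sub_const (p 0)).sub ((hasDerivAt_id t).const_mul c)).congr_deriv (by simp)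
    have hanti : Antitone (fun s => p s - p 0 - c * s) :=
      antitone_of_deriv_nonpos (fun t => (hr t).differentiableAt)
        (fun t => by rw [(hr t).deriv]; linarith [hq t])
    intro t ht
    simpa using hanti ht
  have hh : ∀ t : ℝ, HasDerivAt (fun s => φ s - φ 0 - p 0 * s - c * s ^ 2 / 2)
      (p t - p 0 - c * t) t := by
    intro t
    have h2 : HasDerivAt (fun s : ℝ => c * s ^ 2 / 2) (c * t) t := by
      have := ((hasDerivAt_pow 2 t).const_mul c).div_const 2
      exact this.congr_deriv (by push_cast; ring)
    have := (((hφ t).sub_const (φ 0)).sub ((hasDerivAt_id t).const_mul (p 0))).sub h2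
    exact this.congr_deriv (by ring)
  have hdiff : Differentiable ℝ (fun s => φ s - φ 0 - p 0 * s - c * s ^ 2 / 2) :=
    fun t => (hh t).differentiableAt
  have hanti2 : AntitoneOn (fun s => φ s - φ 0 - p 0 * s - c * s ^ 2 / 2) (Set.Icc 0 1) := by
    apply antitoneOn_of_deriv_nonpos (convex_Icc 0 1) hdiff.continuous.continuousOn
      hdiff.differentiableOn
    intro t ht
    rw [interior_Icc] at ht
    rw [(hh t).deriv]
    exact h1 t ht.1.le
  have := hanti2 (Set.left_mem_Icc.2 zero_le_one) (Set.right_mem_Icc.2 zero_le_one) zero_le_one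
  simp only at this
  nlinarith [this]

private lemma quad_lower (φ p q : ℝ → ℝ) (c : ℝ)
    (hφ : ∀ t, HasDerivAt φ (p t) t)
    (hp : ∀ t, HasDerivAt p (q t) t)
    (hq : ∀ t, c ≤ q t) :
    φ 0 + p 0 + c / 2 ≤ φ 1 := by
  have := quad_upper (fun t => -φ t) (fun t => -p t) (fun t => -q t) (-c)
    (fun t => (hφ t).neg) (fun t => (hp t).neg) (fun t => neg_le_neg (hq t))
  linarith

private lemma vec_taylor {n : ℕ} (f : EuclideanSpace ℝ (Fin n) → ℝ) (hf : ContDiff ℝ 2 f)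
    (a c : ℝ) (x v : EuclideanSpace ℝ (Fin n))
    (ha : ∀ y, a ≤ ⟪fderiv ℝ (fun z => gradient f z) y v, v⟫)
    (hc : ∀ y, ⟪fderiv ℝ (fun z => gradient f z) y v, v⟫ ≤ c) :
    f x + ⟪gradient f x, v⟫ + a / 2 ≤ f (x + v) ∧
      f (x + v) ≤ f x + ⟪gradient f x, v⟫ + c / 2 := by
  have hfd : Differentiable ℝ f := hf.differentiable (by norm_num)
  have hg : Differentiable ℝ (fun z => gradient f z) := by
    have h1 : ContDiff ℝ 1 (fderiv ℝ f) := hf.fderiv_right (by norm_num)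
    have h2 := ((InnerProductSpace.toDual ℝ
      (EuclideanSpace ℝ (Fin n))).symm.toContinuousLinearEquiv.toContinuousLinearMap.differentiable).comp
      (h1.differentiable one_ne_zero)
    exact h2
  have hline : ∀ t : ℝ, HasDerivAt (fun s : ℝ => x + s • v) v t := fun t => by
    simpa using ((hasDerivAt_id t).smul_const v).const_add x
  set φ : ℝ → ℝ := fun t => f (x + t • v) with hφdef
  set p : ℝ → ℝ := fun t => ⟪gradient f (x + t • v), v⟫ with hpdef
  set q : ℝ → ℝ := fun t => ⟪fderiv ℝ (fun z => gradient f z) (x + t • v) v, v⟫ with hqdef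
  have hφ : ∀ t, HasDerivAt φ (p t) t := by
    intro t
    have h1 := ((hfd (x + t • v)).hasFDerivAt).comp_hasDerivAt t (hline t)
    have he : p t = fderiv ℝ f (x + t • v) v := by
      simp only [hpdef, gradient]
      exact InnerProductSpace.toDual_symm_apply
    rw [hφdef]; rw [he]; exact h1
  have hp : ∀ t, HasDerivAt p (q t) t := by
    intro t
    have h1 := ((hg (x + t • v)).hasFDerivAt).comp_hasDerivAt t (hline t)
    have h2 := HasDerivAt.inner ℝ h1 (hasDerivAt_const t v)
    simpa [hpdef, hqdef] using h2
  have hu := quad_upper φ p q c hφ hp (fun t => hc _)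
  have hl := quad_lower φ p q a hφ hp (fun t => ha _)
  constructor
  · simpa [hφdef, hpdef] using hl
  · simpa [hφdef, hpdef] using hu

theorem stmt_18 {n : ℕ} (f : EuclideanSpace ℝ (Fin n) → ℝ) (μ L σ : ℝ)
    (hμ : 0 < μ) (hμL : μ ≤ L)
    (hσ : 0 < σ) (hσμL : σ ≤ μ / L)
    (hf : ContDiff ℝ 2 f)
    (hstrong : ∀ x v, μ * ‖v‖ ^ 2 ≤ ⟪fderiv ℝ (fun y => gradient f y) x v, v⟫)
    (hsmooth : ∀ x v, ⟪fderiv ℝ (fun y => gradient f y) x v, v⟫ ≤ L * ‖v‖ ^ 2)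
    (xstar : EuclideanSpace ℝ (Fin n)) (hmin : ∀ y, f xstar ≤ f y)
    (x : ℕ → EuclideanSpace ℝ (Fin n))
    (hx : ∀ j, x (j + 1) = x j -
      (σ * (‖gradient f (x j)‖ ^ 2 /
        ⟪fderiv ℝ (fun y => gradient f y) (x j) (gradient f (x j)), gradient f (x j)⟫))
        • gradient f (x j)) :
    ∀ j, f (x (j + 1)) - f xstar ≤ (1 - μ * σ / L) * (f (x j) - f xstar) := by
  intro j
  have hL : 0 < L := lt_of_lt_of_le hμ hμL
  have hxj := hx j
  set g : EuclideanSpace ℝ (Fin n) := gradient f (x j) with hgdef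
  set G : ℝ := ‖g‖ ^ 2 with hGdef
  set δ : ℝ := ⟪fderiv ℝ (fun y => gradient f y) (x j) g, g⟫ with hδdef
  have hGnn : 0 ≤ G := by rw [hGdef]; positivity
  -- PL inequality
  have hPL : f (x j) - f xstar ≤ G / (2 * μ) := by
    obtain ⟨hlow, -⟩ := vec_taylor f hf (μ * ‖xstar - x j‖ ^ 2) (L * ‖xstar - x j‖ ^ 2)
      (x j) (xstar - x j) (fun y => hstrong y _) (fun y => hsmooth y _)
    rw [← hgdef] at hlow
    have heq : x j + (xstar - x j) = xstar := by abel
    rw [heq] at hlow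
    have hcs : -(‖g‖ * ‖xstar - x j‖) ≤ ⟪g, xstar - x j⟫ := by
      have h1 := abs_real_inner_le_norm g (xstar - x j)
      have h2 := neg_abs_le (⟪g, xstar - x j⟫ : ℝ)
      linarith
    have hub : f (x j) - f xstar ≤ ‖g‖ * ‖xstar - x j‖ - μ * ‖xstar - x j‖ ^ 2 / 2 := by
      linarith
    rw [hGdef, le_div_iff₀ (by positivity : (0:ℝ) < 2 * μ)]
    have h3 := mul_le_mul_of_nonneg_right hub
      (le_of_lt (by positivity : (0:ℝ) < 2 * μ))
    nlinarith [h3, sq_nonneg (‖g‖ - μ * ‖xstar - x j‖)]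
  have hFnn : 0 ≤ f (x j) - f xstar := sub_nonneg.2 (hmin _)
  by_cases hg0 : g = 0
  · have hx1 : x (j + 1) = x j := by rw [hxj, hg0]; simp
    have hF : f (x j) - f xstar = 0 := by
      have : G = 0 := by rw [hGdef, hg0]; simp
      refine le_antisymm ?_ hFnn
      rw [this] at hPL; simpa using hPL
    rw [hx1, hF]; simp
  · have hGpos : 0 < G := by
      rw [hGdef]
      have := norm_pos_iff.2 hg0
      positivity
    have hδl : μ * G ≤ δ := by rw [hδdef, hGdef]; exact hstrong (x j) g
    have hδu : δ ≤ L * G := by rw [hδdef, hGdef]; exact hsmooth (x j) g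
    have hδpos : 0 < δ := lt_of_lt_of_le (by positivity) hδl
    set s : ℝ := σ * (G / δ) with hsdef
    have hspos : 0 < s := by rw [hsdef]; positivity
    have hs1 : s ≤ 1 / L := by
      have h1 : G / δ ≤ 1 / μ := by
        rw [div_le_div_iff₀ hδpos hμ]; linarith
      have h2 : s ≤ (μ / L) * (1 / μ) := by
        rw [hsdef]
        exact mul_le_mul hσμL h1 (by positivity) (by positivity)
      have h3 : (μ / L) * (1 / μ) = 1 / L := by
        field_simp
      linarith
    have hs2 : σ / L ≤ s := by
      have h1 : 1 / L ≤ G / δ := by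
        rw [div_le_div_iff₀ hL hδpos]; linarith
      have h2 : σ * (1 / L) ≤ σ * (G / δ) :=
        mul_le_mul_of_nonneg_left h1 hσ.le
      rw [hsdef]; linarith [h2, (by ring : σ * (1 / L) = σ / L)]
    -- descent step
    have hstep : x (j + 1) = x j + (-s) • g := by
      rw [hxj, sub_eq_add_neg, neg_smul]
    obtain ⟨-, hup⟩ := vec_taylor f hf (μ * ‖(-s) • g‖ ^ 2) (L * ‖(-s) • g‖ ^ 2)
      (x j) ((-s) • g) (fun y => hstrong y _) (fun y => hsmooth y _)
    rw [← hstep, ← hgdef] at hup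
    have e1 : ⟪g, (-s) • g⟫ = -s * G := by
      rw [real_inner_smul_right, real_inner_self_eq_norm_sq, hGdef]
    have e2 : ‖(-s) • g‖ ^ 2 = s ^ 2 * G := by
      rw [norm_smul, mul_pow, Real.norm_eq_abs, abs_neg, sq_abs, hGdef]
    rw [e1, e2] at hup
    have hLs : L * s ≤ 1 := by
      have h := mul_le_mul_of_nonneg_left hs1 hL.le
      rwa [mul_one_div, div_self hL.ne'] at h
    have e3 : L * (s ^ 2 * G) / 2 ≤ s * G / 2 := by
      have h0 : 0 ≤ (1 - L * s) * (s * G) :=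
        mul_nonneg (by linarith) (mul_nonneg hspos.le hGnn)
      nlinarith [h0]
    have e4 : (μ * σ / L) * (f (x j) - f xstar) ≤ σ * G / (2 * L) := by
      have h1 : (μ * σ / L) * (f (x j) - f xstar) ≤ (μ * σ / L) * (G / (2 * μ)) :=
        mul_le_mul_of_nonneg_left hPL (by positivity)
      have h2 : (μ * σ / L) * (G / (2 * μ)) = σ * G / (2 * L) := by
        field_simp
      linarith
    have e5 : σ * G / (2 * L) ≤ s * G / 2 := by
      have h := mul_le_mul_of_nonneg_right hs2 (by linarith : (0:ℝ) ≤ G / 2)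
      calc σ * G / (2 * L) = (σ / L) * (G / 2) := by ring
        _ ≤ s * (G / 2) := h
        _ = s * G / 2 := by ring
    have expand : (1 - μ * σ / L) * (f (x j) - f xstar)
        = (f (x j) - f xstar) - (μ * σ / L) * (f (x j) - f xstar) := by ring
    linarith [hup, e3, e4, e5, expand]
end
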